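/- Augmentation along an augmenting path strictly increases the flow value: let f be a flow and v_0 = s, v_1, …, v_k = t a list of pairwise distinct vertices with r_f v_i v_{i+1} > 0 for each i, and let δ = min_i r_f v_i v_{i+1}. Then δ > 0 and the function f' obtained from f by adding δ to f v_i v_{i+1} and subtracting δ from f v_{i+1} v_i for each i (and leaving all other pairs unchanged) is again a flow, with |f'| = |f| + δ. -/

import Mathlib

open Finset

variable {V : Type*} [Fintype V] [DecidableEq V]

/-- A flow on a network with capacities `c`, source `s` and sink `t`. -/
def IsFlow (c : V → V → ℝ) (s t : V) (f : V → V → ℝ) : Prop :=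
  (∀ u v, f u v ≤ c u v) ∧ (∀ u v, f u v = - f v u) ∧
    ∀ v, v ≠ s → v ≠ t → ∑ u, f u v = 0

/-- The value of a flow: the net flow into the sink. -/
def flowValue (t : V) (f : V → V → ℝ) : ℝ := ∑ v, f v t

/-- A residual path from `a` to `b` of length `k` w.r.t. flow `f`:
a list of vertices `a = v 0, v 1, …, v k = b` with positive residual
capacity `c - f` along each consecutive pair. -/
def IsResidualPath (c f : V → V → ℝ) (a b : V) (k : ℕ) (p : Fin (k + 1) → V) : Prop :=
  p 0 = a ∧ p (Fin.last k) = b ∧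
    ∀ i : Fin k, 0 < c (p i.castSucc) (p i.succ) - f (p i.castSucc) (p i.succ)

/-- Augmenting along an augmenting path of pairwise distinct vertices by the
bottleneck residual capacity `δ` yields a flow whose value is larger by `δ > 0`. -/
theorem augment_increases_value (c : V → V → ℝ) (s t : V) (hst : s ≠ t)
    (hc : ∀ u v, 0 ≤ c u v) (f : V → V → ℝ) (hf : IsFlow c s t f)
    (k : ℕ) (hk : 0 < k) (p : Fin (k + 1) → V)
    (hp : IsResidualPath c f s t k p) (hinj : Function.Injective p)
    (δ : ℝ)
    (hδ : δ = (Finset.univ : Finset (Fin k)).inf'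
      (Finset.univ_nonempty_iff.mpr (Fin.pos_iff_nonempty.mp hk))
      (fun i => c (p i.castSucc) (p i.succ) - f (p i.castSucc) (p i.succ)))
    (f' : V → V → ℝ)
    (hf'fwd : ∀ i : Fin k, f' (p i.castSucc) (p i.succ) = f (p i.castSucc) (p i.succ) + δ)
    (hf'bwd : ∀ i : Fin k, f' (p i.succ) (p i.castSucc) = f (p i.succ) (p i.castSucc) - δ)
    (hf'other : ∀ x y, (∀ i : Fin k,
        ¬(p i.castSucc = x ∧ p i.succ = y) ∧ ¬(p i.castSucc = y ∧ p i.succ = x)) →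
      f' x y = f x y) :
    0 < δ ∧ IsFlow c s t f' ∧ flowValue t f' = flowValue t f + δ := by

  obtain ⟨hp0, hpl, hpos⟩ := hp
  obtain ⟨hcap, hskew, hcons⟩ := hf
  have hδpos : 0 < δ := by
    rw [hδ, Finset.lt_inf'_iff]
    intro i _
    exact hpos i
  have hδle : ∀ i : Fin k, δ ≤ c (p i.castSucc) (p i.succ) - f (p i.castSucc) (p i.succ) := by
    intro i
    rw [hδ]
    exact Finset.inf'_le _ (mem_univ i)
  -- classification of f'
  have key : ∀ x y, f' x y =
      if ∃ i : Fin k, p i.castSucc = x ∧ p i.succ = y then f x y + δ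
      else if ∃ i : Fin k, p i.succ = x ∧ p i.castSucc = y then f x y - δ
      else f x y := by
    intro x y
    split_ifs with h1 h2
    · obtain ⟨i, hi1, hi2⟩ := h1
      rw [← hi1, ← hi2]; exact hf'fwd i
    · obtain ⟨i, hi1, hi2⟩ := h2
      rw [← hi1, ← hi2]; exact hf'bwd i
    · push_neg at h1 h2
      apply hf'other
      intro i
      constructor
      · intro ⟨a, b⟩; exact h1 i a b
      · intro ⟨a, b⟩; exact h2 i b a
  have hexcl : ∀ x y, (∃ i : Fin k, p i.castSucc = x ∧ p i.succ = y) →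
      ¬ ∃ j : Fin k, p j.castSucc = y ∧ p j.succ = x := by
    rintro x y ⟨i, hi1, hi2⟩ ⟨j, hj1, hj2⟩
    have e1 : (i : ℕ) = (j : ℕ) + 1 := by
      have := hinj (hi1.trans hj2.symm)
      simpa [Fin.ext_iff] using this
    have e2 : (i : ℕ) + 1 = (j : ℕ) := by
      have := hinj (hi2.trans hj1.symm)
      simpa [Fin.ext_iff] using this
    omega
  refine ⟨hδpos, ⟨?_, ?_, ?_⟩, ?_⟩
  · -- capacity
    intro u v
    rw [key u v]
    split_ifs with h1 h2
    · obtain ⟨i, hi1, hi2⟩ := h1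
      have := hδle i
      rw [hi1, hi2] at this
      linarith
    · have := hcap u v; linarith
    · exact hcap u v
  · -- antisymmetry
    intro u v
    have h12 : (∃ i : Fin k, p i.castSucc = u ∧ p i.succ = v) ↔
        (∃ i : Fin k, p i.succ = v ∧ p i.castSucc = u) := by
      constructor <;> rintro ⟨i, a, b⟩ <;> exact ⟨i, b, a⟩
    have h34 : (∃ i : Fin k, p i.succ = u ∧ p i.castSucc = v) ↔
        (∃ i : Fin k, p i.castSucc = v ∧ p i.succ = u) := by
      constructor <;> rintro ⟨i, a, b⟩ <;> exact ⟨i, b, a⟩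
    rw [key u v, key v u]
    by_cases hA : ∃ i : Fin k, p i.castSucc = u ∧ p i.succ = v
    · have hC : ¬ ∃ i : Fin k, p i.castSucc = v ∧ p i.succ = u := hexcl u v hA
      rw [if_pos hA, if_neg hC, if_pos (h12.mp hA), hskew u v]; ring
    · by_cases hB : ∃ i : Fin k, p i.succ = u ∧ p i.castSucc = v
      · rw [if_neg hA, if_pos hB, if_pos (h34.mp hB), hskew u v]; ring
      · have hC : ¬ ∃ i : Fin k, p i.castSucc = v ∧ p i.succ = u :=
          fun h => hB (h34.mpr h)
        have hD : ¬ ∃ i : Fin k, p i.succ = v ∧ p i.castSucc = u :=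
          fun h => hA (h12.mpr h)
        rw [if_neg hA, if_neg hB, if_neg hC, if_neg hD, hskew u v]
  · -- conservation
    intro v hvs hvt
    by_cases hv : ∃ m : Fin (k + 1), p m = v
    · obtain ⟨m, hm⟩ := hv
      have hm0 : (m : ℕ) ≠ 0 := by
        intro h
        apply hvs
        rw [← hm, ← hp0]
        congr 1
        exact Fin.ext (by simpa using h)
      have hmk : (m : ℕ) < k := by
        have : m ≠ Fin.last k := by
          intro h; apply hvt; rw [← hm, h, hpl]
        have := m.isLt
        have h' : (m : ℕ) ≠ k := fun h => ‹m ≠ Fin.last k› (Fin.ext h)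
        omega
      set j : Fin k := ⟨(m : ℕ) - 1, by omega⟩ with hjdef
      set i : Fin k := ⟨(m : ℕ), hmk⟩ with hidef
      have hjs : j.succ = m := Fin.ext (by simp [hjdef]; omega)
      have hic : i.castSucc = m := Fin.ext (by simp [hidef])
      set a := p j.castSucc with ha
      set b := p i.succ with hb
      have hab : a ≠ b := by
        intro h
        have h2 := hinj h
        rw [Fin.ext_iff] at h2
        simp only [Fin.coe_castSucc, Fin.val_succ, hjdef, hidef] at h2
        omega
      have hga : f' a v = f a v + δ := by
        rw [← hm, ← hjs]; exact hf'fwd j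
      have hgb : f' b v = f b v - δ := by
        rw [← hm, ← hic]; exact hf'bwd i
      have hg0 : ∀ u, u ≠ a → u ≠ b → f' u v = f u v := by
        intro u hua hub
        apply hf'other
        intro i'
        constructor
        · rintro ⟨h1, h2⟩
          apply hua
          have : i'.succ = m := hinj (h2.trans hm.symm)
          have : i' = j := by
            apply Fin.succ_injective
            rw [this, hjs]
          rw [← h1, this]
        · rintro ⟨h1, h2⟩
          apply hub
          have : i'.castSucc = m := hinj (h1.trans hm.symm)
          have : i' = i := by
            apply Fin.castSucc_injective
            rw [this, hic]
          rw [← h2, this]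
      have hsum : ∑ u, (f' u v - f u v) = 0 := by
        rw [← Finset.sum_subset (Finset.subset_univ ({a, b} : Finset V))]
        · rw [Finset.sum_pair hab, hga, hgb]; ring
        · intro x _ hx
          simp at hx
          rw [hg0 x hx.1 hx.2]; ring
      have := hcons v hvs hvt
      rw [Finset.sum_sub_distrib] at hsum
      linarith
    · push_neg at hv
      have : ∀ u, f' u v = f u v := by
        intro u
        apply hf'other
        intro i
        exact ⟨fun ⟨_, h⟩ => hv _ h, fun ⟨h, _⟩ => hv _ h⟩
      calc ∑ u, f' u v = ∑ u, f u v := Finset.sum_congr rfl fun u _ => this u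
        _ = 0 := hcons v hvs hvt
  · -- value
    set j : Fin k := ⟨k - 1, by omega⟩ with hjdef
    have hjs : j.succ = Fin.last k := Fin.ext (by simp [hjdef, Fin.last]; omega)
    set a := p j.castSucc with ha
    have hga : f' a t = f a t + δ := by
      rw [← hpl, ← hjs]; exact hf'fwd j
    have hg0 : ∀ u, u ≠ a → f' u t = f u t := by
      intro u hua
      apply hf'other
      intro i'
      constructor
      · rintro ⟨h1, h2⟩
        apply hua
        have : i'.succ = Fin.last k := hinj (h2.trans hpl.symm)
        have : i' = j := by
          apply Fin.succ_injective
          rw [this, hjs]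
        rw [← h1, this]
      · rintro ⟨h1, h2⟩
        have : i'.castSucc = Fin.last k := hinj (h1.trans hpl.symm)
        have := i'.isLt
        simp [Fin.ext_iff, Fin.last] at *
        omega
    have hsum : ∑ u, (f' u t - f u t) = δ := by
      rw [← Finset.sum_subset (Finset.subset_univ ({a} : Finset V))]
      · rw [Finset.sum_singleton, hga]; ring
      · intro x _ hx
        simp at hx
        rw [hg0 x hx]; ring
    rw [Finset.sum_sub_distrib] at hsum
    unfold flowValue
    linarith
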